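/- In a De Morgan algebra defined on an algebraic (equivalently, doubly algebraic completely distributive) lattice, for every element x, c(x) = ⋁{ j completely join-irreducible : j* ≰ x }. -/

import Mathlib

def CompletelyJoinIrreducible {A : Type*} [CompleteLattice A] (j : A) : Prop :=
  ∀ S : Set A, j = sSup S → j ∈ S

def star {A : Type*} [CompleteLattice A] (c : A → A) (j : A) : A :=
  sInf {x : A | ¬ x ≤ c j}

section Aux

variable {A : Type*} [CompleteLattice A]

/-- An antitone involution turns `sSup` into `sInf` of the image. -/
lemma c_sSup_aux (c : A → A) (hinv : ∀ x, c (c x) = x)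
    (hanti : ∀ x y : A, x ≤ y ↔ c y ≤ c x) (S : Set A) :
    c (sSup S) = sInf (c '' S) := by
  apply le_antisymm
  · apply le_sInf
    rintro _ ⟨s, hs, rfl⟩
    exact (hanti _ _).mp (le_sSup hs)
  · have h1 : sSup S ≤ c (sInf (c '' S)) := by
      apply sSup_le
      intro s hs
      have : sInf (c '' S) ≤ c s := sInf_le ⟨s, hs, rfl⟩
      have := (hanti _ _).mp this
      rwa [hinv] at this
    have h2 := (hanti _ _).mp h1
    rwa [hinv] at h2

lemma c_sInf_aux (c : A → A) (hinv : ∀ x, c (c x) = x)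
    (hanti : ∀ x y : A, x ≤ y ↔ c y ≤ c x) (S : Set A) :
    c (sInf S) = sSup (c '' S) := by
  have himg : c '' (c '' S) = S := by
    ext y; constructor
    · rintro ⟨_, ⟨z, hz, rfl⟩, rfl⟩; rwa [hinv]
    · intro hy; exact ⟨c y, ⟨y, hy, rfl⟩, hinv y⟩
  have := c_sSup_aux c hinv hanti (c '' S)
  rw [himg] at this
  rw [← this, hinv]

/-- A completely join-irreducible element is compact. -/
lemma cji_compact [IsCompactlyGenerated A] {j : A} (hj : CompletelyJoinIrreducible j) :
    IsCompactElement j := by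
  obtain ⟨s, hs, hsup⟩ := IsCompactlyGenerated.exists_sSup_eq j
  exact hs j (hj s hsup.symm)

/-- In a distributive complete lattice, a completely join-irreducible element is
prime for finite sups. -/
lemma cji_finset_prime (hdist : ∀ x y z : A, x ⊓ (y ⊔ z) = (x ⊓ y) ⊔ (x ⊓ z))
    {j : A} (hj : CompletelyJoinIrreducible j) :
    ∀ t : Finset A, j ≤ t.sup id → ∃ x ∈ t, j ≤ x := by
  intro t
  classical
  induction t using Finset.induction_on with
  | empty =>
      intro h
      simp only [Finset.sup_empty] at h
      have hjbot : j = ⊥ := le_bot_iff.mp h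
      have := hj ∅ (by rw [sSup_empty]; exact hjbot)
      exact absurd this (Set.notMem_empty j)
  | @insert a t' _ ih =>
      intro h
      rw [Finset.sup_insert] at h
      have heq : j = (j ⊓ a) ⊔ (j ⊓ t'.sup id) := by
        rw [← hdist]
        exact (inf_eq_left.mpr h).symm
      have hmem := hj {j ⊓ a, j ⊓ t'.sup id} (by rw [sSup_pair]; exact heq)
      rcases hmem with h1 | h2
      · exact ⟨a, Finset.mem_insert_self a t', by rw [h1]; exact inf_le_right⟩
      · have h2' : j = j ⊓ t'.sup id := h2
        obtain ⟨x, hx, hjx⟩ := ih (by rw [h2']; exact inf_le_right)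
        exact ⟨x, Finset.mem_insert_of_mem hx, hjx⟩

/-- A completely join-irreducible element is completely join prime. -/
lemma cji_prime [IsCompactlyGenerated A]
    (hdist : ∀ x y z : A, x ⊓ (y ⊔ z) = (x ⊓ y) ⊔ (x ⊓ z))
    {j : A} (hj : CompletelyJoinIrreducible j) :
    ∀ T : Set A, j ≤ sSup T → ∃ t ∈ T, j ≤ t := by
  intro T hT
  obtain ⟨t, hts, hle⟩ := (CompleteLattice.isCompactElement_iff_exists_le_sSup_of_le_sSup (k := j)).mp (cji_compact hj) T hT
  obtain ⟨x, hx, hjx⟩ := cji_finset_prime hdist hj t hle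
  exact ⟨x, hts hx, hjx⟩

/-- Separation by completely meet-irreducible elements. -/
lemma exists_cmi [IsCompactlyGenerated A] {a u : A} (h : ¬ u ≤ a) :
    ∃ m : A, (∀ T : Set A, m = sInf T → m ∈ T) ∧ a ≤ m ∧ ¬ u ≤ m := by
  -- find a compact k ≤ u with ¬ k ≤ a
  have hu : sSup { c : A | IsCompactElement c ∧ c ≤ u } = u :=
    sSup_compact_le_eq u
  have hk : ∃ k : A, IsCompactElement k ∧ k ≤ u ∧ ¬ k ≤ a := by
    by_contra hc
    push_neg at hc
    apply h
    calc u = sSup { c : A | IsCompactElement c ∧ c ≤ u } := hu.symm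
      _ ≤ a := sSup_le fun c hc' => hc c hc'.1 hc'.2
  obtain ⟨k, hkc, hku, hka⟩ := hk
  -- Zorn on {y | a ≤ y ∧ ¬ k ≤ y}
  have hzorn := zorn_le_nonempty₀ {y : A | a ≤ y ∧ ¬ k ≤ y} ?_ a ⟨le_rfl, hka⟩
  · obtain ⟨m, ham, hmem, hmax⟩ := hzorn
    refine ⟨m, ?_, hmem.1, fun hum => hmem.2 (le_trans hku hum)⟩
    intro T hT
    by_contra hmT
    have hkm : k ≤ m := by
      rw [hT]
      apply le_sInf
      intro t ht
      have hmt : m ≤ t := hT ▸ sInf_le ht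
      by_contra hkt
      have htP : t ∈ {y : A | a ≤ y ∧ ¬ k ≤ y} := ⟨le_trans hmem.1 hmt, hkt⟩
      have := hmax htP hmt
      exact hmT (le_antisymm hmt this ▸ ht)
    exact hmem.2 hkm
  · intro ch hch hchain y hy
    refine ⟨sSup ch, ⟨le_trans (hch hy).1 (le_sSup hy), ?_⟩, fun z hz => le_sSup hz⟩
    intro hks
    rw [CompleteLattice.isCompactElement_iff_le_of_directed_sSup_le] at hkc
    obtain ⟨z, hzch, hkz⟩ := hkc ch ⟨y, hy⟩ hchain.directedOn hks
    exact (hch hzch).2 hkz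

/-- Separation by completely join-irreducible elements. -/
lemma exists_cji [IsCompactlyGenerated A]
    (c : A → A) (hinv : ∀ x, c (c x) = x)
    (hanti : ∀ x y : A, x ≤ y ↔ c y ≤ c x)
    {a u : A} (h : ¬ u ≤ a) :
    ∃ j : A, CompletelyJoinIrreducible j ∧ j ≤ u ∧ ¬ j ≤ a := by
  have h' : ¬ c a ≤ c u := fun hc => h (by
    have := (hanti (c a) (c u)).mp hc
    rwa [hinv, hinv] at this)
  obtain ⟨m, hm, hcum, hcam⟩ := exists_cmi (a := c u) h'
  refine ⟨c m, ?_, ?_, ?_⟩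
  · intro S hS
    have : m = sInf (c '' S) := by
      have := congrArg c hS
      rw [hinv, c_sSup_aux c hinv hanti] at this
      exact this
    obtain ⟨s, hs, hcs⟩ := hm (c '' S) this
    have : c m = s := by rw [← hcs, hinv]
    rwa [this]
  · have := (hanti (c u) m).mp hcum
    rwa [hinv] at this
  · intro hcma
    apply hcam
    have := (hanti (c m) a).mp hcma
    rwa [hinv] at this

end Aux

/-- In a De Morgan algebra defined on an algebraic (distributive) lattice,
`c x = ⋁ { j completely join-irreducible : j* ≰ x }`. -/
theorem compl_eq_sSup_star_not_le {A : Type*} [CompleteLattice A] [IsCompactlyGenerated A]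
    (hdist : ∀ x y z : A, x ⊓ (y ⊔ z) = (x ⊓ y) ⊔ (x ⊓ z))
    (c : A → A) (hinv : ∀ x, c (c x) = x)
    (hanti : ∀ x y : A, x ≤ y ↔ c y ≤ c x)
    (x : A) :
    c x = sSup {j : A | CompletelyJoinIrreducible j ∧ ¬ star c j ≤ x} := by
  apply le_antisymm
  · -- hard direction
    by_contra hb
    obtain ⟨j, hj, hjcx, hjS⟩ := exists_cji c hinv hanti hb
    apply hjS
    apply le_sSup
    refine ⟨hj, ?_⟩
    -- show ¬ star c j ≤ x
    intro hstar
    -- j ≤ c x gives x ≤ c j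
    have hxcj : x ≤ c j := by
      rw [hanti, hinv]; exact hjcx
    have h1 : star c j ≤ c j := le_trans hstar hxcj
    -- hence j ≤ c (star c j) = sSup (c '' {y | ¬ y ≤ c j})
    have h2 : j ≤ c (star c j) := by
      have := (hanti (star c j) (c j)).mp h1
      rwa [hinv] at this
    rw [show star c j = sInf {y : A | ¬ y ≤ c j} from rfl, c_sInf_aux c hinv hanti] at h2
    obtain ⟨z, hz, hjz⟩ := cji_prime hdist hj _ h2
    obtain ⟨y, hy, rfl⟩ := hz
    apply hy
    rw [hanti, hinv]
    exact hjz
  · apply sSup_le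
    rintro j ⟨_, hstar⟩
    by_contra hjcx
    apply hstar
    apply sInf_le
    intro hxcj
    apply hjcx
    have := (hanti x (c j)).mp hxcj
    rwa [hinv] at this
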